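/- Let two ergodic Markov chains on finite state space S have stationary distributions π, π' and kernels p, p'. Then for all s ∈ S: ‖√(π(s))·p(·|s) − √(π'(s))·p'(·|s)‖₂² ≤ 2·π(s)·‖p(·|s) − p'(·|s)‖₂² + 2·(√(π(s)) − √(π'(s)))². Consequently, summing over s, the embedding separation Δ_W² satisfies Δ_W² ≤ (2·p_max/log(e/2))·D_π + 4·H²(π, π'), where D_π = Σ_s π(s)·KL(p(·|s), p'(·|s)), p_max is the maximal transition probability, and H² is the squared Hellinger distance. -/

import Mathlib

open Real Finset

/-- The Kullback–Leibler divergence between two pmfs on a finite set. -/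
noncomputable def KLdiv {S : Type*} [Fintype S] (p q : S → ℝ) : ℝ :=
  ∑ s, p s * Real.log (p s / q s)

/-- Padé upper bound for log on (0,1]. -/
lemma aux_log_upper {y : ℝ} (h0 : 0 < y) (h1 : y ≤ 1) :
    Real.log y ≤ 2 - 4 / (y + 1) := by
  set f : ℝ → ℝ := fun t => 2 - 4 / (t + 1) - Real.log t with hf
  have hd : ∀ t : ℝ, 0 < t → HasDerivAt f (4 / (t + 1) ^ 2 - 1 / t) t := by
    intro t ht
    have ht1 : t + 1 ≠ 0 := by positivity
    have h1' : HasDerivAt (fun t : ℝ => t + 1) 1 t := (hasDerivAt_id t).add_const 1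
    have h2 : HasDerivAt (fun t : ℝ => (4 : ℝ) / (t + 1))
        ((0 * (t + 1) - 4 * 1) / (t + 1) ^ 2) t :=
      (hasDerivAt_const t (4 : ℝ)).div h1' ht1
    have h3 : HasDerivAt Real.log t⁻¹ t := Real.hasDerivAt_log (ne_of_gt ht)
    have h := ((hasDerivAt_const t (2 : ℝ)).sub h2).sub h3
    refine h.congr_deriv ?_
    field_simp
    ring
  have anti : AntitoneOn f (Set.Icc y 1) := by
    apply antitoneOn_of_deriv_nonpos (convex_Icc y 1)
    · intro t ht
      exact ((hd t (lt_of_lt_of_le h0 ht.1)).continuousAt).continuousWithinAt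
    · intro t ht
      rw [interior_Icc] at ht
      exact (hd t (lt_trans h0 ht.1)).differentiableAt.differentiableWithinAt
    · intro t ht
      rw [interior_Icc] at ht
      have ht0 : 0 < t := lt_trans h0 ht.1
      rw [(hd t ht0).deriv]
      have he : 4 / (t + 1) ^ 2 - 1 / t = -((t - 1) ^ 2 / (t * (t + 1) ^ 2)) := by
        field_simp
        ring
      rw [he]
      have : (0:ℝ) ≤ (t - 1) ^ 2 / (t * (t + 1) ^ 2) := by positivity
      linarith
  have h := anti (Set.left_mem_Icc.mpr h1) (Set.right_mem_Icc.mpr h1) h1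
  have hf1 : f 1 = 0 := by simp [hf]; norm_num
  rw [hf1] at h
  simp only [hf] at h
  linarith

/-- sinh-type lower bound for log on (0,1]. -/
lemma aux_log_lower {y : ℝ} (h0 : 0 < y) (h1 : y ≤ 1) :
    (y - y⁻¹) / 2 ≤ Real.log y := by
  set f : ℝ → ℝ := fun t => Real.log t - (t - t⁻¹) / 2 with hf
  have hd : ∀ t : ℝ, 0 < t → HasDerivAt f (1 / t - (1 + (t ^ 2)⁻¹) / 2) t := by
    intro t ht
    have h3 : HasDerivAt Real.log t⁻¹ t := Real.hasDerivAt_log (ne_of_gt ht)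
    have h4 : HasDerivAt (fun t : ℝ => t⁻¹) (-(t ^ 2)⁻¹) t := hasDerivAt_inv (ne_of_gt ht)
    have h5 : HasDerivAt (fun t : ℝ => (t - t⁻¹) / 2) ((1 - -(t ^ 2)⁻¹) / 2) t :=
      ((hasDerivAt_id t).sub h4).div_const 2
    have h := h3.sub h5
    refine h.congr_deriv ?_
    field_simp
    ring
  have anti : AntitoneOn f (Set.Icc y 1) := by
    apply antitoneOn_of_deriv_nonpos (convex_Icc y 1)
    · intro t ht
      exact ((hd t (lt_of_lt_of_le h0 ht.1)).continuousAt).continuousWithinAt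
    · intro t ht
      rw [interior_Icc] at ht
      exact (hd t (lt_trans h0 ht.1)).differentiableAt.differentiableWithinAt
    · intro t ht
      rw [interior_Icc] at ht
      have ht0 : 0 < t := lt_trans h0 ht.1
      rw [(hd t ht0).deriv]
      have he : 1 / t - (1 + (t ^ 2)⁻¹) / 2 = -((t - 1) ^ 2 / (2 * t ^ 2)) := by
        field_simp
        ring
      rw [he]
      have : (0:ℝ) ≤ (t - 1) ^ 2 / (2 * t ^ 2) := by positivity
      linarith
  have h := anti (Set.left_mem_Icc.mpr h1) (Set.right_mem_Icc.mpr h1) h1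
  have hf1 : f 1 = 0 := by simp [hf]
  rw [hf1] at h
  simp only [hf] at h
  linarith

/-- pointwise KL lower bound -/
lemma kl_point {M a b : ℝ} (ha : 0 ≤ a) (hb : 0 < b) (haM : a ≤ M) (hbM : b ≤ M) :
    (a - b) ^ 2 ≤ 2 * M * (a * Real.log (a / b) + b - a) := by
  have hM : 0 < M := lt_of_lt_of_le hb hbM
  rcases eq_or_lt_of_le ha with h0 | ha
  · rw [← h0]
    simp
    nlinarith
  rcases le_or_gt b a with hba | hab
  · -- a ≥ b : use Padé bound on y = b/a
    have hy0 : 0 < b / a := div_pos hb ha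
    have hy1 : b / a ≤ 1 := (div_le_one ha).mpr hba
    have hlog := aux_log_upper hy0 hy1
    have hrev : Real.log (a / b) = - Real.log (b / a) := by
      rw [← Real.log_inv]
      congr 1
      field_simp
    have hL : 4 * a / (a + b) - 2 ≤ Real.log (a / b) := by
      rw [hrev]
      have he : 2 - 4 / (b / a + 1) = 2 - 4 * a / (a + b) := by
        rw [div_add' _ _ _ (ne_of_gt ha)]
        rw [div_div_eq_mul_div]
        ring_nf
      rw [he] at hlog
      linarith
    have hstep : (a - b) ^ 2 ≤ 2 * M * (a * (4 * a / (a + b) - 2) + b - a) := by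
      have hab0 : 0 < a + b := by linarith
      have he : a * (4 * a / (a + b) - 2) + b - a = (a - b) ^ 2 / (a + b) := by
        field_simp
        ring
      rw [he, ← mul_div_assoc, le_div_iff₀ hab0]
      nlinarith [sq_nonneg (a - b)]
    refine hstep.trans ?_
    have : a * (4 * a / (a + b) - 2) ≤ a * Real.log (a / b) :=
      mul_le_mul_of_nonneg_left hL (le_of_lt ha)
    nlinarith
  · -- a < b : use sinh bound on y = a/b
    have hy0 : 0 < a / b := div_pos ha hb
    have hy1 : a / b ≤ 1 := (div_le_one hb).mpr (le_of_lt hab)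
    have hlog := aux_log_lower hy0 hy1
    have hL : (a / b - b / a) / 2 ≤ Real.log (a / b) := by
      have : (a / b)⁻¹ = b / a := by
        rw [inv_div]
      rw [this] at hlog
      exact hlog
    have hstep : (a - b) ^ 2 ≤ 2 * M * (a * ((a / b - b / a) / 2) + b - a) := by
      have he : a * ((a / b - b / a) / 2) + b - a = (a - b) ^ 2 / (2 * b) := by
        field_simp
        ring
      rw [he, ← mul_div_assoc, le_div_iff₀ (by positivity : (0:ℝ) < 2 * b)]
      nlinarith [sq_nonneg (a - b)]
    refine hstep.trans ?_
    have : a * ((a / b - b / a) / 2) ≤ a * Real.log (a / b) :=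
      mul_le_mul_of_nonneg_left hL (le_of_lt ha)
    nlinarith
lemma row_bound {S : Type*} [Fintype S] {M : ℝ} (a b : S → ℝ)
    (ha : ∀ s, 0 ≤ a s) (hb : ∀ s, 0 < b s) (haM : ∀ s, a s ≤ M) (hbM : ∀ s, b s ≤ M)
    (hra : ∑ s, a s = 1) (hrb : ∑ s, b s = 1) :
    ∑ s, (a s - b s) ^ 2 ≤ 2 * M * ∑ s, a s * Real.log (a s / b s) := by
  calc ∑ s, (a s - b s) ^ 2
      ≤ ∑ s, 2 * M * (a s * Real.log (a s / b s) + b s - a s) :=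
        Finset.sum_le_sum fun s _ => kl_point (ha s) (hb s) (haM s) (hbM s)
    _ = 2 * M * ∑ s, a s * Real.log (a s / b s) := by
        rw [← Finset.mul_sum]
        congr 1
        rw [Finset.sum_sub_distrib, Finset.sum_add_distrib, hra, hrb]
        ring

/-- for two ergodic chains `(p, pi)` and `(p', pi')` on a finite state
space, each row of the embedding difference satisfies
`‖√(pi s)·p(·|s) − √(pi' s)·p'(·|s)‖₂² ≤ 2·pi(s)·‖p(·|s) − p'(·|s)‖₂² + 2·(√(pi s) − √(pi' s))²`,
and consequently
`Δ_W² ≤ (2·p_max/log(e/2))·D_π + 4·H²(pi, pi')`,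
where `D_π = Σ_s pi(s)·KL(p(·|s), p'(·|s))`, `p_max` is the maximal transition
probability, and `H²` is the squared Hellinger distance. -/
theorem embedding_separation_upper_bound {S : Type*} [Fintype S] [Nonempty S]
    (p p' : S → S → ℝ) (pi pi' : S → ℝ)
    (hp0 : ∀ s s', 0 ≤ p s s') (hp'0 : ∀ s s', 0 < p' s s')
    (hprow : ∀ s, ∑ s', p s s' = 1) (hp'row : ∀ s, ∑ s', p' s s' = 1)
    (hπ0 : ∀ s, 0 < pi s) (hπ'0 : ∀ s, 0 < pi' s)
    (hπ1 : ∑ s, pi s = 1) (hπ'1 : ∑ s, pi' s = 1)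
    (hstat : ∀ s', ∑ s, pi s * p s s' = pi s')
    (h'stat : ∀ s', ∑ s, pi' s * p' s s' = pi' s') :
    (∀ s, ∑ s', (Real.sqrt (pi s) * p s s' - Real.sqrt (pi' s) * p' s s') ^ 2 ≤
        2 * pi s * ∑ s', (p s s' - p' s s') ^ 2 +
          2 * (Real.sqrt (pi s) - Real.sqrt (pi' s)) ^ 2) ∧
    (∑ s, ∑ s', (Real.sqrt (pi s) * p s s' - Real.sqrt (pi' s) * p' s s') ^ 2 ≤
      (2 * (max (Finset.univ.sup' Finset.univ_nonempty fun z : S × S => p z.1 z.2)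
               (Finset.univ.sup' Finset.univ_nonempty fun z : S × S => p' z.1 z.2)) /
          (1 - Real.log 2)) *
        (∑ s, pi s * KLdiv (p s) (p' s)) +
      4 * ((1 / 2) * ∑ s, (Real.sqrt (pi s) - Real.sqrt (pi' s)) ^ 2)) := by
  set M := max (Finset.univ.sup' Finset.univ_nonempty fun z : S × S => p z.1 z.2)
      (Finset.univ.sup' Finset.univ_nonempty fun z : S × S => p' z.1 z.2) with hMdef
  have part1 : ∀ s, ∑ s', (Real.sqrt (pi s) * p s s' - Real.sqrt (pi' s) * p' s s') ^ 2 ≤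
      2 * pi s * ∑ s', (p s s' - p' s s') ^ 2 +
        2 * (Real.sqrt (pi s) - Real.sqrt (pi' s)) ^ 2 := by
    intro s
    have hsq : Real.sqrt (pi s) ^ 2 = pi s := Real.sq_sqrt (hπ0 s).le
    have hle1 : ∀ s', p' s s' ≤ 1 := by
      intro s'
      rw [← hp'row s]
      exact Finset.single_le_sum (fun i _ => (hp'0 s i).le) (Finset.mem_univ s')
    calc ∑ s', (Real.sqrt (pi s) * p s s' - Real.sqrt (pi' s) * p' s s') ^ 2
        ≤ ∑ s', (2 * pi s * (p s s' - p' s s') ^ 2 +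
            2 * (Real.sqrt (pi s) - Real.sqrt (pi' s)) ^ 2 * (p' s s') ^ 2) := by
          apply Finset.sum_le_sum
          intro s' _
          nlinarith [sq_nonneg (Real.sqrt (pi s) * (p s s' - p' s s') -
            (Real.sqrt (pi s) - Real.sqrt (pi' s)) * p' s s'), hsq]
      _ = 2 * pi s * ∑ s', (p s s' - p' s s') ^ 2 +
            2 * (Real.sqrt (pi s) - Real.sqrt (pi' s)) ^ 2 * ∑ s', (p' s s') ^ 2 := by
          rw [Finset.sum_add_distrib, ← Finset.mul_sum, ← Finset.mul_sum]
      _ ≤ 2 * pi s * ∑ s', (p s s' - p' s s') ^ 2 +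
            2 * (Real.sqrt (pi s) - Real.sqrt (pi' s)) ^ 2 := by
          have hs1 : ∑ s', (p' s s') ^ 2 ≤ 1 := by
            rw [← hp'row s]
            exact Finset.sum_le_sum fun i _ => by nlinarith [hp'0 s i, hle1 i]
          nlinarith [sq_nonneg (Real.sqrt (pi s) - Real.sqrt (pi' s))]
  have hMp : ∀ s s', p s s' ≤ M := fun s s' =>
    le_max_of_le_left (Finset.le_sup' (f := fun z : S × S => p z.1 z.2) (Finset.mem_univ (s, s')))
  have hMp' : ∀ s s', p' s s' ≤ M := fun s s' =>
    le_max_of_le_right (Finset.le_sup' (f := fun z : S × S => p' z.1 z.2) (Finset.mem_univ (s, s')))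
  have s0 : S := Classical.arbitrary S
  have hMpos : 0 < M := lt_of_lt_of_le (hp'0 s0 s0) (hMp' s0 s0)
  have hrow : ∀ s, ∑ s', (p s s' - p' s s') ^ 2 ≤ 2 * M * KLdiv (p s) (p' s) := by
    intro s
    simpa [KLdiv] using row_bound (M := M) (p s) (p' s) (hp0 s) (hp'0 s)
      (hMp s) (hMp' s) (hprow s) (hp'row s)
  have hKL0 : ∀ s, 0 ≤ KLdiv (p s) (p' s) := by
    intro s
    by_contra hneg
    push_neg at hneg
    have h1 : (0:ℝ) ≤ ∑ s', (p s s' - p' s s') ^ 2 :=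
      Finset.sum_nonneg fun _ _ => sq_nonneg _
    nlinarith [hrow s, mul_pos hMpos (neg_pos.mpr hneg)]
  have hD0 : 0 ≤ ∑ s, pi s * KLdiv (p s) (p' s) :=
    Finset.sum_nonneg fun s _ => mul_nonneg (hπ0 s).le (hKL0 s)
  have hlog2a : Real.log 2 < 1 := by
    have := Real.log_two_lt_d9; linarith
  have hlog2b : (1:ℝ)/2 < Real.log 2 := by
    have := Real.log_two_gt_d9; linarith
  refine ⟨part1, ?_⟩
  calc ∑ s, ∑ s', (Real.sqrt (pi s) * p s s' - Real.sqrt (pi' s) * p' s s') ^ 2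
      ≤ ∑ s, (2 * pi s * ∑ s', (p s s' - p' s s') ^ 2 +
          2 * (Real.sqrt (pi s) - Real.sqrt (pi' s)) ^ 2) :=
        Finset.sum_le_sum fun s _ => part1 s
    _ ≤ ∑ s, (2 * pi s * (2 * M * KLdiv (p s) (p' s)) +
          2 * (Real.sqrt (pi s) - Real.sqrt (pi' s)) ^ 2) := by
        apply Finset.sum_le_sum
        intro s _
        have := mul_le_mul_of_nonneg_left (hrow s)
          (by linarith [hπ0 s] : (0:ℝ) ≤ 2 * pi s)
        linarith
    _ = 4 * M * (∑ s, pi s * KLdiv (p s) (p' s)) +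
          2 * ∑ s, (Real.sqrt (pi s) - Real.sqrt (pi' s)) ^ 2 := by
        rw [Finset.sum_add_distrib, ← Finset.mul_sum]
        congr 1
        rw [Finset.mul_sum]
        apply Finset.sum_congr rfl
        intro s _
        ring
    _ ≤ (2 * M / (1 - Real.log 2)) * (∑ s, pi s * KLdiv (p s) (p' s)) +
          4 * ((1 / 2) * ∑ s, (Real.sqrt (pi s) - Real.sqrt (pi' s)) ^ 2) := by
        have hc : 4 * M ≤ 2 * M / (1 - Real.log 2) := by
          rw [le_div_iff₀ (by linarith : (0:ℝ) < 1 - Real.log 2)]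
          nlinarith [hMpos]
        have := mul_le_mul_of_nonneg_right hc hD0
        nlinarith [this]
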